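/- For every integer m ≥ 2, ∑_{k=0}^{m} C(m,k)·D(m,k) = 0, where D(m,k) is defined in the context. (Equivalently: for the uniform per-item value distribution on [0,1] and the split attack, at q = 1/2 the expected utility of truthful bidding equals the expected utility of the attack, for any number of bidders n = m+1 ≥ 3.) -/

import Mathlib

open intervalIntegral

/-- Truthful minus split-attack utility of a bidder of true type (2,1) submitting the
false-name bids (1,1),(1,1), when the two highest one-item adversary per-item values are
`a ≥ b` and the highest two-item adversary per-item value is `w`. -/
noncomputable def delta (w a b : ℝ) : ℝ :=
  if w ≤ (a + b) / 2 then a - b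
  else if w ≤ (1 + a) / 2 then 2 * a - 2 * w
  else 2 * w - 2

/-- Expected value of `delta` for `m` adversaries with i.i.d. uniform per-item values on
[0,1], of which `k` demand one item, with respect to the relevant order statistics. -/
noncomputable def D (m k : ℕ) : ℝ :=
  if k = 0 then
    m * ∫ w in (0:ℝ)..1, w ^ (m - 1) * delta w 0 0
  else if k = 1 then
    ((m : ℝ) - 1) * ∫ v in (0:ℝ)..1, ∫ w in (0:ℝ)..1, w ^ (m - 2) * delta w v 0
  else if k = m then
    (m : ℝ) * ((m : ℝ) - 1) *
      ∫ v₁ in (0:ℝ)..1, ∫ v₂ in (0:ℝ)..v₁, v₂ ^ (m - 2) * delta 0 v₁ v₂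
  else
    (k : ℝ) * ((k : ℝ) - 1) * ((m : ℝ) - k) *
      ∫ v₁ in (0:ℝ)..1, ∫ v₂ in (0:ℝ)..v₁, ∫ w in (0:ℝ)..1,
        v₂ ^ (k - 2) * w ^ (m - k - 1) * delta w v₁ v₂

lemma delta_cont (a b : ℝ) (hb : b ≤ 1) : Continuous (fun w => delta w a b) := by
  unfold delta
  apply Continuous.if_le _ _ continuous_id continuous_const
  · intro x hx
    simp only [id_eq] at hx
    rw [if_pos (by rw [hx]; linarith), hx]; ring
  · exact continuous_const
  · apply Continuous.if_le (by fun_prop) (by fun_prop) continuous_id continuous_const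
    intro x hx; simp only [id_eq] at hx; rw [hx]; ring

lemma ii_cpow (c : ℝ) (n : ℕ) (u v : ℝ) :
    IntervalIntegrable (fun x : ℝ => c * x ^ n) MeasureTheory.volume u v :=
  (continuous_const.mul (continuous_pow n)).intervalIntegrable u v

lemma inner_integral (p : ℕ) (a b : ℝ) (hb : 0 ≤ b) (hba : b ≤ a) (ha : a ≤ 1) :
    ∫ w in (0:ℝ)..1, w ^ p * delta w a b
      = -2 / (((p:ℝ) + 1) * ((p:ℝ) + 2)) *
          (((a + b) / 2) ^ (p + 2) - 2 * ((1 + a) / 2) ^ (p + 2) + 1) := by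
  have hb1 : b ≤ 1 := hba.trans ha
  have hcont : Continuous (fun w => w ^ p * delta w a b) :=
    (continuous_pow p).mul (delta_cont a b hb1)
  set t1 : ℝ := (a + b) / 2 with ht1
  set t2 : ℝ := (1 + a) / 2 with ht2
  have h0t1 : (0:ℝ) ≤ t1 := by rw [ht1]; linarith
  have ht12 : t1 ≤ t2 := by rw [ht1, ht2]; linarith
  have ht21 : t2 ≤ 1 := by rw [ht2]; linarith
  have hint : ∀ u v : ℝ, IntervalIntegrable (fun w => w ^ p * delta w a b) MeasureTheory.volume u v :=
    fun u v => hcont.intervalIntegrable u v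
  have hsplit : (∫ w in (0:ℝ)..1, w ^ p * delta w a b)
      = (∫ w in (0:ℝ)..t1, w ^ p * delta w a b) + ((∫ w in t1..t2, w ^ p * delta w a b)
        + (∫ w in t2..(1:ℝ), w ^ p * delta w a b)) := by
    rw [← integral_add_adjacent_intervals (hint 0 t1) (hint t1 1),
        ← integral_add_adjacent_intervals (hint t1 t2) (hint t2 1)]
  have hp1 : ∫ w in (0:ℝ)..t1, w ^ p * delta w a b = (a - b) * (t1 ^ (p+1)) / ((p:ℝ)+1) := by
    rw [integral_congr (g := fun w => w ^ p * (a - b)) ?_]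
    · rw [integral_mul_const, integral_pow]
      rw [zero_pow (by omega : p + 1 ≠ 0)]
      push_cast; ring
    · intro w hw
      rw [Set.uIcc_of_le h0t1] at hw
      simp only [delta, if_pos (show w ≤ (a + b) / 2 from hw.2)]
  have hp2 : ∫ w in t1..t2, w ^ p * delta w a b
      = 2*a*((t2^(p+1) - t1^(p+1))/((p:ℝ)+1)) - 2*((t2^(p+2) - t1^(p+2))/((p:ℝ)+2)) := by
    rw [integral_congr (g := fun w => 2*a*w^p - 2*w^(p+1)) ?_]
    · rw [integral_sub (ii_cpow (2*a) p t1 t2) (ii_cpow 2 (p+1) t1 t2), integral_const_mul,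
        integral_const_mul, integral_pow, integral_pow]
      push_cast; ring
    · intro w hw
      rw [Set.uIcc_of_le ht12] at hw
      rcases le_or_gt w t1 with h | h
      · have hw1 : w = t1 := le_antisymm h hw.1
        simp only [delta, hw1, if_pos le_rfl, ← ht1]
        rw [ht1]; ring
      · simp only [delta, ← ht1, ← ht2, if_neg (not_le.mpr h), if_pos hw.2]
        ring
  have hp3 : ∫ w in t2..(1:ℝ), w ^ p * delta w a b
      = 2*((1 - t2^(p+2))/((p:ℝ)+2)) - 2*((1 - t2^(p+1))/((p:ℝ)+1)) := by
    rw [integral_congr (g := fun w => 2*w^(p+1) - 2*w^p) ?_]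
    · rw [integral_sub (ii_cpow 2 (p+1) t2 1) (ii_cpow 2 p t2 1), integral_const_mul,
        integral_const_mul, integral_pow, integral_pow]
      push_cast; ring
    · intro w hw
      rw [Set.uIcc_of_le ht21] at hw
      rcases le_or_gt w t1 with h | h
      · have hb1' : (1:ℝ) ≤ b := by
          have : t2 ≤ t1 := hw.1.trans h
          rw [ht1, ht2] at this; linarith
        have hab : a = 1 := le_antisymm ha (hb1'.trans hba)
        have hbb : b = 1 := le_antisymm hb1 hb1'
        have h2w : (1:ℝ) ≤ w := by
          have := hw.1; rw [ht2, hab] at this; linarith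
        have hwt : w = 1 := le_antisymm hw.2 h2w
        subst hwt hab hbb
        norm_num [delta]
      · rcases le_or_gt w t2 with h2 | h2
        · have hw2 : w = t2 := le_antisymm h2 hw.1
          have hc1 : ¬ (w ≤ (a+b)/2) := by rw [← ht1]; exact not_le.mpr h
          have hc2 : w ≤ (1+a)/2 := by rw [← ht2]; exact h2
          simp only [delta, if_neg hc1, if_pos hc2]
          rw [hw2, ht2]; ring
        · have hc1 : ¬ (w ≤ (a+b)/2) := by rw [← ht1]; exact not_le.mpr h
          have hc2 : ¬ (w ≤ (1+a)/2) := by rw [← ht2]; exact not_le.mpr h2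
          simp only [delta, if_neg hc1, if_neg hc2]
          ring
  rw [hsplit, hp1, hp2, hp3]
  have hpn1 : ((p:ℝ)+1) ≠ 0 := by positivity
  have hpn2 : ((p:ℝ)+2) ≠ 0 := by positivity
  field_simp
  ring

lemma scale_integral (k n : ℕ) (v : ℝ) (hv : 0 ≤ v) :
    ∫ x in (0:ℝ)..v, x ^ k * ((v + x)/2) ^ n
      = v ^ (k + n + 1) * ∫ t in (0:ℝ)..1, t ^ k * ((1 + t)/2) ^ n := by
  rcases eq_or_lt_of_le hv with h | h
  · rw [← h]
    simp [zero_pow (n := k + n + 1) (by omega)]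
  · have hvne : v ≠ 0 := ne_of_gt h
    have key := integral_comp_mul_left (a := (0:ℝ)) (b := 1)
      (f := fun x => x ^ k * ((v + x)/2) ^ n) (c := v) hvne
    rw [mul_zero, mul_one] at key
    have h2 : (∫ t in (0:ℝ)..1, (v*t) ^ k * ((v + v*t)/2) ^ n)
        = v ^ (k+n) * ∫ t in (0:ℝ)..1, t ^ k * ((1 + t)/2) ^ n := by
      rw [← integral_const_mul]
      apply integral_congr
      intro t _
      show (v*t) ^ k * ((v + v*t)/2) ^ n = _
      have hrw : (v + v*t)/2 = v * ((1+t)/2) := by ring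
      rw [hrw, mul_pow, mul_pow]
      ring
    rw [h2] at key
    have key2 := congrArg (fun z => v * z) key
    simp only [smul_eq_mul, ← mul_assoc, mul_inv_cancel₀ hvne, one_mul] at key2
    rw [← key2, pow_succ]
    ring

lemma affine_integral (n : ℕ) (c d : ℝ) (hc : c ≠ 0) :
    ∫ x in (0:ℝ)..1, (c*x + d) ^ n = ((c+d)^(n+1) - d^(n+1)) / (((n:ℝ)+1) * c) := by
  have key := integral_comp_mul_add (a := (0:ℝ)) (b := 1) (f := fun x => x ^ n) (c := c) hc d
  simp only [mul_zero, zero_add, mul_one, smul_eq_mul] at key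
  rw [key, integral_pow, inv_mul_eq_div, div_div]

set_option maxHeartbeats 1000000 in
lemma mid_eval (j q : ℕ) :
    (((q:ℝ)+2) * ((j:ℝ)+(q:ℝ)+4)) * D (j+q+3) (j+2)
      = -2*((j:ℝ)+2)*((j:ℝ)+1) * (∫ t in (0:ℝ)..1, t^j * ((1+t)/2)^(q+2))
        + 4*((j:ℝ)+2)*((j:ℝ)+(q:ℝ)+4) * (∫ t in (0:ℝ)..1, t^(j+1) * ((1+t)/2)^(q+2))
        - 2*((j:ℝ)+(q:ℝ)+4) := by
  set β : ℝ := ∫ t in (0:ℝ)..1, t^j * ((1+t)/2)^(q+2) with hβ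
  set γ : ℝ := ∫ t in (0:ℝ)..1, t^(j+1) * ((1+t)/2)^(q+2) with hγ
  have e1 : (j+2) - 2 = j := by omega
  have e2 : (j+q+3) - (j+2) - 1 = q := by omega
  rw [D, if_neg (by omega : ¬ (j+2 = 0)), if_neg (by omega : ¬ (j+2 = 1)),
      if_neg (by omega : ¬ (j+2 = j+q+3)), e1, e2]
  have hOuter : Set.EqOn
      (fun v₁ => ∫ v₂ in (0:ℝ)..v₁, ∫ w in (0:ℝ)..1, v₂ ^ j * w ^ q * delta w v₁ v₂)
      (fun v₁ => ((-2/(((q:ℝ)+1)*((q:ℝ)+2)))*β) * v₁^(j+q+3)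
        + (-2*(-2/(((q:ℝ)+1)*((q:ℝ)+2)))/((j:ℝ)+1)) * (v₁^(j+1) * ((1+v₁)/2)^(q+2))
        + ((-2/(((q:ℝ)+1)*((q:ℝ)+2)))/((j:ℝ)+1)) * v₁^(j+1))
      (Set.uIcc (0:ℝ) 1) := by
    intro v₁ hv₁
    rw [Set.uIcc_of_le (by norm_num : (0:ℝ) ≤ 1)] at hv₁
    obtain ⟨h0, h1⟩ := hv₁
    have hInner : Set.EqOn
        (fun v₂ => ∫ w in (0:ℝ)..1, v₂ ^ j * w ^ q * delta w v₁ v₂)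
        (fun v₂ => (-2/(((q:ℝ)+1)*((q:ℝ)+2))) * (v₂^j * ((v₁+v₂)/2)^(q+2))
          + ((-2/(((q:ℝ)+1)*((q:ℝ)+2))) * (1 - 2*((1+v₁)/2)^(q+2))) * v₂^j)
        (Set.uIcc (0:ℝ) v₁) := by
      intro v₂ hv₂
      rw [Set.uIcc_of_le h0] at hv₂
      show (∫ w in (0:ℝ)..1, v₂ ^ j * w ^ q * delta w v₁ v₂) = _
      simp only [mul_assoc]
      rw [integral_const_mul, inner_integral q v₁ v₂ hv₂.1 hv₂.2 h1]
      ring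
    show (∫ v₂ in (0:ℝ)..v₁, ∫ w in (0:ℝ)..1, v₂ ^ j * w ^ q * delta w v₁ v₂) = _
    rw [integral_congr hInner,
        integral_add ((by fun_prop : Continuous fun x:ℝ =>
            (-2/(((q:ℝ)+1)*((q:ℝ)+2))) * (x^j * ((v₁+x)/2)^(q+2))).intervalIntegrable _ _)
          (ii_cpow _ j _ _),
        integral_const_mul, integral_const_mul, scale_integral j (q+2) v₁ h0, integral_pow]
    rw [show j+(q+2)+1 = j+q+3 from by omega, ← hβ]
    have hj1 : ((j:ℝ)+1) ≠ 0 := by positivity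
    push_cast
    rw [zero_pow (by omega : j+1 ≠ 0)]
    field_simp
    ring
  rw [integral_congr hOuter,
      integral_add (((by fun_prop : Continuous fun v:ℝ => ((-2/(((q:ℝ)+1)*((q:ℝ)+2)))*β) * v^(j+q+3)
          + (-2*(-2/(((q:ℝ)+1)*((q:ℝ)+2)))/((j:ℝ)+1)) * (v^(j+1) * ((1+v)/2)^(q+2))).intervalIntegrable _ _))
        (ii_cpow _ (j+1) _ _),
      integral_add (ii_cpow _ (j+q+3) _ _)
        ((by fun_prop : Continuous fun v:ℝ =>
          (-2*(-2/(((q:ℝ)+1)*((q:ℝ)+2)))/((j:ℝ)+1)) * (v^(j+1) * ((1+v)/2)^(q+2))).intervalIntegrable _ _),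
      integral_const_mul, integral_const_mul, integral_const_mul, integral_pow, integral_pow,
      ← hγ]
  have hj1 : ((j:ℝ)+1) ≠ 0 := by positivity
  have hj2 : ((j:ℝ)+2) ≠ 0 := by positivity
  have hq1 : ((q:ℝ)+1) ≠ 0 := by positivity
  have hq2 : ((q:ℝ)+2) ≠ 0 := by positivity
  have hjq : ((j:ℝ)+(q:ℝ)+4) ≠ 0 := by positivity
  push_cast
  rw [zero_pow (by omega : j+q+3+1 ≠ 0), zero_pow (by omega : j+1+1 ≠ 0)]
  field_simp
  ring

set_option maxHeartbeats 1000000 in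
lemma mid_choose (j q : ℕ) :
    ((j:ℝ)+(q:ℝ)+4) * ((((j+q+3).choose (j+2) : ℕ)) : ℝ) * D (j+q+3) (j+2)
      = -2*((j:ℝ)+(q:ℝ)+3) * (((j+q+2).choose j : ℕ) : ℝ)
          * (∫ t in (0:ℝ)..1, t^j * ((1+t)/2)^(q+2))
        + 4*((j:ℝ)+(q:ℝ)+4) * (((j+q+3).choose (j+1) : ℕ) : ℝ)
          * (∫ t in (0:ℝ)..1, t^(j+1) * ((1+t)/2)^(q+2))
        - 2 * (((j+q+4).choose (j+2) : ℕ) : ℝ) := by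
  have hB : (j+q+3).choose (j+2) * (j+2) = (j+q+3).choose (j+1) * (q+2) := by
    have := Nat.choose_succ_right_eq (j+q+3) (j+1)
    rw [show j+1+1 = j+2 from rfl, show j+q+3-(j+1) = q+2 from by omega] at this
    exact this
  have hA : (j+q+3) * (j+q+2).choose j = (j+q+3).choose (j+1) * (j+1) := by
    have := Nat.add_one_mul_choose_eq (j+q+2) j
    rw [show j+q+2+1 = j+q+3 from rfl] at this
    exact this
  have hC : (j+q+3).choose (j+2) * (j+q+4) = (j+q+4).choose (j+2) * (q+2) := by
    have := Nat.choose_mul_succ_eq (j+q+3) (j+2)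
    rw [show j+q+3+1 = j+q+4 from rfl, show j+q+4-(j+2) = q+2 from by omega] at this
    exact this
  have cB : (((j+q+3).choose (j+2) : ℕ) : ℝ) * ((j:ℝ)+2)
      = (((j+q+3).choose (j+1) : ℕ) : ℝ) * ((q:ℝ)+2) := by exact_mod_cast congrArg Nat.cast hB
  have cA : ((j:ℝ)+(q:ℝ)+3) * (((j+q+2).choose j : ℕ) : ℝ)
      = (((j+q+3).choose (j+1) : ℕ) : ℝ) * ((j:ℝ)+1) := by exact_mod_cast congrArg Nat.cast hA
  have cC : (((j+q+3).choose (j+2) : ℕ) : ℝ) * ((j:ℝ)+(q:ℝ)+4)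
      = (((j+q+4).choose (j+2) : ℕ) : ℝ) * ((q:ℝ)+2) := by exact_mod_cast congrArg Nat.cast hC
  have hq2 : ((q:ℝ)+2) ≠ 0 := by positivity
  apply mul_left_cancel₀ hq2
  set β : ℝ := ∫ t in (0:ℝ)..1, t^j * ((1+t)/2)^(q+2) with hβ
  set γ : ℝ := ∫ t in (0:ℝ)..1, t^(j+1) * ((1+t)/2)^(q+2) with hγ
  linear_combination ((((j+q+3).choose (j+2) : ℕ)) : ℝ) * mid_eval j q
    + (-2*((j:ℝ)+1)*β + 4*((j:ℝ)+(q:ℝ)+4)*γ) * cB + (2*((q:ℝ)+2)*β) * cA + (-2) * cC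

lemma L0 (r : ℕ) : D (r+2) 0 = -2/((r:ℝ)+3) * (1 - 2*(1/2:ℝ)^(r+3)) := by
  rw [D, if_pos rfl, show (r+2) - 1 = r+1 from by omega,
      inner_integral (r+1) 0 0 le_rfl le_rfl zero_le_one]
  rw [show ((0:ℝ)+0)/2 = 0 by norm_num, zero_pow (by omega : r+1+2 ≠ 0),
      show ((1:ℝ)+0)/2 = 1/2 by norm_num, show r+1+2 = r+3 from by omega]
  have h2 : ((r:ℝ)+2) ≠ 0 := by positivity
  have h3 : ((r:ℝ)+3) ≠ 0 := by positivity
  push_cast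
  field_simp
  ring

lemma L1 (r : ℕ) : D (r+2) 1 = -2*((r:ℝ) - 1 + 6*(1/2:ℝ)^(r+3)) / (((r:ℝ)+2)*((r:ℝ)+3)) := by
  rw [D, if_neg (by omega : ¬ (1 = 0)), if_pos rfl, show (r+2) - 2 = r from by omega]
  have hOut : Set.EqOn
      (fun v => ∫ w in (0:ℝ)..1, w ^ r * delta w v 0)
      (fun v => -2/(((r:ℝ)+1)*((r:ℝ)+2)) * (((1/2:ℝ)*v+0)^(r+2) - 2*((1/2:ℝ)*v+(1/2:ℝ))^(r+2) + 1))
      (Set.uIcc (0:ℝ) 1) := by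
    intro v hv
    rw [Set.uIcc_of_le (by norm_num : (0:ℝ) ≤ 1)] at hv
    show (∫ w in (0:ℝ)..1, w ^ r * delta w v 0) = _
    rw [inner_integral r v 0 le_rfl hv.1 hv.2,
        show (v+(0:ℝ))/2 = (1/2:ℝ)*v+0 by ring, show ((1:ℝ)+v)/2 = (1/2:ℝ)*v+(1/2:ℝ) by ring]
  rw [integral_congr hOut, integral_const_mul,
      integral_add ((by fun_prop : Continuous fun v:ℝ =>
          ((1/2:ℝ)*v+0)^(r+2) - 2*((1/2:ℝ)*v+(1/2:ℝ))^(r+2)).intervalIntegrable _ _)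
        intervalIntegrable_const,
      integral_sub ((by fun_prop : Continuous fun v:ℝ =>
          ((1/2:ℝ)*v+0)^(r+2)).intervalIntegrable _ _)
        ((by fun_prop : Continuous fun v:ℝ =>
          2*((1/2:ℝ)*v+(1/2:ℝ))^(r+2)).intervalIntegrable _ _),
      affine_integral (r+2) (1/2) 0 (by norm_num), integral_const_mul,
      affine_integral (r+2) (1/2) (1/2) (by norm_num)]
  have h1 : ((r:ℝ)+1) ≠ 0 := by positivity
  have h2 : ((r:ℝ)+2) ≠ 0 := by positivity
  have h3 : ((r:ℝ)+3) ≠ 0 := by positivity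
  rw [zero_pow (by omega : r+2+1 ≠ 0), show ((1:ℝ)/2+0) = 1/2 by norm_num,
      show ((1:ℝ)/2+1/2) = 1 by norm_num, one_pow, show r+2+1 = r+3 from by omega]
  push_cast
  rw [intervalIntegral.integral_const]
  field_simp
  ring

lemma Lm (r : ℕ) : D (r+2) (r+2) = 1/((r:ℝ)+3) := by
  rw [D, if_neg (by omega : ¬ (r+2 = 0)), if_neg (by omega : ¬ (r+2 = 1)), if_pos rfl,
      show (r+2) - 2 = r from by omega]
  have hOut : Set.EqOn
      (fun v₁ => ∫ v₂ in (0:ℝ)..v₁, v₂ ^ r * delta 0 v₁ v₂)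
      (fun v₁ => (1/((r:ℝ)+1) - 1/((r:ℝ)+2)) * v₁^(r+2))
      (Set.uIcc (0:ℝ) 1) := by
    intro v₁ hv₁
    rw [Set.uIcc_of_le (by norm_num : (0:ℝ) ≤ 1)] at hv₁
    have hIn : Set.EqOn (fun v₂ => v₂ ^ r * delta 0 v₁ v₂)
        (fun v₂ => v₁ * v₂ ^ r - v₂ ^ (r+1)) (Set.uIcc (0:ℝ) v₁) := by
      intro v₂ hv₂
      rw [Set.uIcc_of_le hv₁.1] at hv₂
      show v₂ ^ r * delta 0 v₁ v₂ = _
      rw [delta, if_pos (by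
        have := hv₁.1; have := hv₂.1; have := hv₂.2; linarith)]
      ring
    show (∫ v₂ in (0:ℝ)..v₁, v₂ ^ r * delta 0 v₁ v₂) = _
    rw [integral_congr hIn,
        integral_sub (ii_cpow v₁ r 0 v₁) ((continuous_pow (r+1)).intervalIntegrable _ _),
        integral_const_mul, integral_pow, integral_pow]
    have h1 : ((r:ℝ)+1) ≠ 0 := by positivity
    have h2 : ((r:ℝ)+2) ≠ 0 := by positivity
    push_cast
    rw [zero_pow (by omega : r+1 ≠ 0), zero_pow (by omega : r+1+1 ≠ 0)]
    field_simp
    ring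
  rw [integral_congr hOut, integral_const_mul, integral_pow]
  have h1 : ((r:ℝ)+1) ≠ 0 := by positivity
  have h2 : ((r:ℝ)+2) ≠ 0 := by positivity
  have h3 : ((r:ℝ)+3) ≠ 0 := by positivity
  push_cast
  field_simp
  ring

lemma binom_tail (r : ℕ) (t X : ℝ) :
    ∑ j ∈ Finset.range r, ((r+1).choose j : ℝ) * (t^j * X^(r+1-j))
      = (t+X)^(r+1) - ((r:ℝ)+1)*t^r*X - t^(r+1) := by
  have h := add_pow t X (r+1)
  rw [show r+1+1 = (r+1)+1 from rfl, Finset.sum_range_succ, Finset.sum_range_succ] at h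
  rw [Nat.sub_self, Nat.choose_self, show r+1-r = 1 from by omega, Nat.choose_succ_self_right] at h
  have h2 : ∑ j ∈ Finset.range r, t^j * X^(r+1-j) * ((r+1).choose j : ℝ)
      = (t+X)^(r+1) - ((r:ℝ)+1)*t^r*X - t^(r+1) := by
    rw [h]; push_cast; ring
  rw [← h2]
  apply Finset.sum_congr rfl
  intro j _
  ring

lemma binom_tail2 (r : ℕ) (v X : ℝ) :
    ∑ j ∈ Finset.range r, ((r+2).choose (j+1) : ℝ) * (v^(j+1) * X^(r+1-j))
      = (v+X)^(r+2) - X^(r+2) - ((r:ℝ)+2)*v^(r+1)*X - v^(r+2) := by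
  have h := add_pow v X (r+2)
  rw [show r+2+1 = ((r+1)+1)+1 from rfl, Finset.sum_range_succ, Finset.sum_range_succ,
      Finset.sum_range_succ'] at h
  rw [Nat.sub_self, Nat.choose_self, show r+2-(r+1) = 1 from by omega,
      Nat.choose_succ_self_right] at h
  have h2 : ∑ j ∈ Finset.range r, v^(j+1) * X^(r+2-(j+1)) * ((r+2).choose (j+1) : ℝ)
      = (v+X)^(r+2) - X^(r+2) - ((r:ℝ)+2)*v^(r+1)*X - v^(r+2) := by
    rw [eq_sub_iff_add_eq, eq_sub_iff_add_eq, eq_sub_iff_add_eq]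
    rw [h]
    push_cast
    simp only [pow_zero, one_mul, Nat.choose_zero_right, Nat.cast_one, Nat.sub_zero]
    ring
  rw [← h2]
  apply Finset.sum_congr rfl
  intro j _
  rw [show r+2-(j+1) = r+1-j from by omega]
  ring

lemma choose_mid_sum (r : ℕ) :
    ∑ j ∈ Finset.range r, (((r+3).choose (j+2) : ℕ) : ℝ)
      = 2^(r+3) - 2*(r:ℝ) - 8 := by
  have h := Nat.sum_range_choose (r+3)
  rw [show r+3+1 = ((r+1)+1)+2 from by omega] at h
  rw [Finset.sum_range_succ, Finset.sum_range_succ, Finset.sum_range_succ',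
      Finset.sum_range_succ'] at h
  have hsym : (r+3).choose (r+2) = r+3 := by
    rw [show r+3 = (r+2)+1 from rfl, Nat.choose_succ_self_right]
  have hc := congrArg (Nat.cast (R := ℝ)) h
  push_cast [hsym, Nat.choose_one_right, Nat.choose_zero_right, Nat.choose_self] at hc
  have : ∑ j ∈ Finset.range r, (((r+3).choose (j+2) : ℕ) : ℝ)
      = ∑ x ∈ Finset.range r, (((r+3).choose (x+1+1) : ℕ) : ℝ) := by
    apply Finset.sum_congr rfl; intro j _; norm_num
  rw [this]
  linarith [hc]

lemma EA (r : ℕ) :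
    ∫ t in (0:ℝ)..1, ((t+(1+t)/2)^(r+1) - ((r:ℝ)+1)*t^r*((1+t)/2) - t^(r+1))
      = 2*((2:ℝ)^(r+2) - (1/2:ℝ)^(r+2))/(3*((r:ℝ)+2)) - 1/2 - ((r:ℝ)+3)/(2*((r:ℝ)+2)) := by
  have hEq : Set.EqOn (fun t : ℝ => ((t+(1+t)/2)^(r+1) - ((r:ℝ)+1)*t^r*((1+t)/2) - t^(r+1)))
      (fun t : ℝ => ((3/2:ℝ)*t+(1/2:ℝ))^(r+1)
        - ((((r:ℝ)+1)/2)*t^r + ((((r:ℝ)+1)/2)+1)*t^(r+1))) (Set.uIcc (0:ℝ) 1) := by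
    intro t _
    have hb : t+(1+t)/2 = (3/2:ℝ)*t+(1/2:ℝ) := by ring
    show (t+(1+t)/2)^(r+1) - ((r:ℝ)+1)*t^r*((1+t)/2) - t^(r+1) = _
    rw [hb]; ring
  rw [integral_congr hEq,
      integral_sub ((by fun_prop : Continuous fun t:ℝ =>
          ((3/2:ℝ)*t+(1/2:ℝ))^(r+1)).intervalIntegrable _ _)
        ((ii_cpow _ r 0 1).add (ii_cpow _ (r+1) 0 1)),
      affine_integral (r+1) (3/2) (1/2) (by norm_num),
      integral_add (ii_cpow _ r 0 1) (ii_cpow _ (r+1) 0 1),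
      integral_const_mul, integral_const_mul, integral_pow, integral_pow]
  have h1 : ((r:ℝ)+1) ≠ 0 := by positivity
  have h2 : ((r:ℝ)+2) ≠ 0 := by positivity
  rw [show ((3:ℝ)/2+1/2) = 2 by norm_num, show r+1+1 = r+2 from rfl]
  push_cast
  rw [zero_pow (by omega : r+1 ≠ 0), zero_pow (by omega : r+1+1 ≠ 0)]
  have hhalf : ((1:ℝ)/2)^(r+2) = 2⁻¹^(r+2) := by norm_num
  field_simp
  ring

lemma EB (r : ℕ) :
    ∫ v in (0:ℝ)..1, ((v+(1+v)/2)^(r+2) - ((1+v)/2)^(r+2)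
        - ((r:ℝ)+2)*v^(r+1)*((1+v)/2) - v^(r+2))
      = 2*((2:ℝ)^(r+3) - (1/2:ℝ)^(r+3))/(3*((r:ℝ)+3)) - 2*(1-(1/2:ℝ)^(r+3))/((r:ℝ)+3)
        - 1/2 - ((r:ℝ)+4)/(2*((r:ℝ)+3)) := by
  have hEq : Set.EqOn (fun v : ℝ => ((v+(1+v)/2)^(r+2) - ((1+v)/2)^(r+2)
        - ((r:ℝ)+2)*v^(r+1)*((1+v)/2) - v^(r+2)))
      (fun v : ℝ => (((3/2:ℝ)*v+(1/2:ℝ))^(r+2) - ((1/2:ℝ)*v+(1/2:ℝ))^(r+2))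
        - ((((r:ℝ)+2)/2)*v^(r+1) + ((((r:ℝ)+2)/2)+1)*v^(r+2))) (Set.uIcc (0:ℝ) 1) := by
    intro v _
    have hb : v+(1+v)/2 = (3/2:ℝ)*v+(1/2:ℝ) := by ring
    have hb2 : (1+v)/2 = (1/2:ℝ)*v+(1/2:ℝ) := by ring
    show (v+(1+v)/2)^(r+2) - ((1+v)/2)^(r+2) - ((r:ℝ)+2)*v^(r+1)*((1+v)/2) - v^(r+2) = _
    rw [hb, hb2]; ring
  rw [integral_congr hEq,
      integral_sub (((by fun_prop : Continuous fun v:ℝ =>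
          ((3/2:ℝ)*v+(1/2:ℝ))^(r+2)).intervalIntegrable _ _).sub
          ((by fun_prop : Continuous fun v:ℝ =>
          ((1/2:ℝ)*v+(1/2:ℝ))^(r+2)).intervalIntegrable _ _))
        ((ii_cpow _ (r+1) 0 1).add (ii_cpow _ (r+2) 0 1)),
      integral_sub ((by fun_prop : Continuous fun v:ℝ =>
          ((3/2:ℝ)*v+(1/2:ℝ))^(r+2)).intervalIntegrable _ _)
        ((by fun_prop : Continuous fun v:ℝ =>
          ((1/2:ℝ)*v+(1/2:ℝ))^(r+2)).intervalIntegrable _ _),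
      affine_integral (r+2) (3/2) (1/2) (by norm_num),
      affine_integral (r+2) (1/2) (1/2) (by norm_num),
      integral_add (ii_cpow _ (r+1) 0 1) (ii_cpow _ (r+2) 0 1),
      integral_const_mul, integral_const_mul, integral_pow, integral_pow]
  have h2 : ((r:ℝ)+2) ≠ 0 := by positivity
  have h3 : ((r:ℝ)+3) ≠ 0 := by positivity
  rw [show ((3:ℝ)/2+1/2) = 2 by norm_num, show ((1:ℝ)/2+1/2) = 1 by norm_num, one_pow,
      show r+2+1 = r+3 from rfl]
  push_cast
  rw [zero_pow (by omega : r+1+1 ≠ 0), zero_pow (by omega : r+2+1 ≠ 0)]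
  field_simp
  ring

theorem stmt_8 (m : ℕ) (hm : 2 ≤ m) :
    ∑ k ∈ Finset.range (m + 1), (m.choose k : ℝ) * D m k = 0 := by
  obtain ⟨r, rfl⟩ : ∃ r, m = r + 2 := ⟨m - 2, by omega⟩
  rw [show r+2+1 = ((r+1)+1)+1 from rfl, Finset.sum_range_succ, Finset.sum_range_succ',
      Finset.sum_range_succ']
  have hSA : ∑ j ∈ Finset.range r, (((r+1).choose j : ℕ):ℝ)
        * ∫ t in (0:ℝ)..1, t^j * ((1+t)/2)^(r+1-j)
      = ∫ t in (0:ℝ)..1, ((t+(1+t)/2)^(r+1) - ((r:ℝ)+1)*t^r*((1+t)/2) - t^(r+1)) := by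
    have h1 : ∀ j ∈ Finset.range r, (((r+1).choose j : ℕ):ℝ)
          * ∫ t in (0:ℝ)..1, t^j * ((1+t)/2)^(r+1-j)
        = ∫ t in (0:ℝ)..1, (((r+1).choose j : ℕ):ℝ) * (t^j * ((1+t)/2)^(r+1-j)) := by
      intro j _; rw [integral_const_mul]
    rw [Finset.sum_congr rfl h1,
        ← integral_finset_sum (fun i _ => Continuous.intervalIntegrable (by fun_prop) _ _)]
    apply integral_congr
    intro t _
    exact binom_tail r t ((1+t)/2)
  have hSB : ∑ j ∈ Finset.range r, (((r+2).choose (j+1) : ℕ):ℝ)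
        * ∫ t in (0:ℝ)..1, t^(j+1) * ((1+t)/2)^(r+1-j)
      = ∫ v in (0:ℝ)..1, ((v+(1+v)/2)^(r+2) - ((1+v)/2)^(r+2)
          - ((r:ℝ)+2)*v^(r+1)*((1+v)/2) - v^(r+2)) := by
    have h1 : ∀ j ∈ Finset.range r, (((r+2).choose (j+1) : ℕ):ℝ)
          * ∫ t in (0:ℝ)..1, t^(j+1) * ((1+t)/2)^(r+1-j)
        = ∫ t in (0:ℝ)..1, (((r+2).choose (j+1) : ℕ):ℝ) * (t^(j+1) * ((1+t)/2)^(r+1-j)) := by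
      intro j _; rw [integral_const_mul]
    rw [Finset.sum_congr rfl h1,
        ← integral_finset_sum (fun i _ => Continuous.intervalIntegrable (by fun_prop) _ _)]
    apply integral_congr
    intro v _
    exact binom_tail2 r v ((1+v)/2)
  have hterm : ∀ j ∈ Finset.range r,
      ((r:ℝ)+3) * ((((r+2).choose (j+1+1) : ℕ):ℝ) * D (r+2) (j+1+1))
        = (-2*((r:ℝ)+2)) * ((((r+1).choose j : ℕ):ℝ)
            * ∫ t in (0:ℝ)..1, t^j * ((1+t)/2)^(r+1-j))
          + (4*((r:ℝ)+3)) * ((((r+2).choose (j+1) : ℕ):ℝ)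
            * ∫ t in (0:ℝ)..1, t^(j+1) * ((1+t)/2)^(r+1-j))
          - 2*(((r+3).choose (j+2) : ℕ):ℝ) := by
    intro j hj
    rw [Finset.mem_range] at hj
    obtain ⟨q, rfl⟩ : ∃ q, r = j+q+1 := ⟨r-j-1, by omega⟩
    simp only [show j+q+1+2 = j+q+3 from by omega, show j+q+1+1 = j+q+2 from by omega,
      show j+q+1+3 = j+q+4 from by omega, show j+1+1 = j+2 from rfl,
      show j+q+1+1-j = q+2 from by omega, show j+q+2-j = q+2 from by omega]
    push_cast
    linear_combination mid_choose j q
  have hS : ((r:ℝ)+3) * ∑ x ∈ Finset.range r,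
        (((r+2).choose (x+1+1) : ℕ):ℝ) * D (r+2) (x+1+1)
      = (-2*((r:ℝ)+2)) * (∫ t in (0:ℝ)..1,
            ((t+(1+t)/2)^(r+1) - ((r:ℝ)+1)*t^r*((1+t)/2) - t^(r+1)))
        + (4*((r:ℝ)+3)) * (∫ v in (0:ℝ)..1, ((v+(1+v)/2)^(r+2) - ((1+v)/2)^(r+2)
            - ((r:ℝ)+2)*v^(r+1)*((1+v)/2) - v^(r+2)))
        - 2*((2:ℝ)^(r+3) - 2*(r:ℝ) - 8) := by
    rw [Finset.mul_sum, Finset.sum_congr rfl hterm, Finset.sum_sub_distrib,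
        Finset.sum_add_distrib, ← Finset.mul_sum, ← Finset.mul_sum, ← Finset.mul_sum,
        hSA, hSB, choose_mid_sum]
  have h3 : ((r:ℝ)+3) ≠ 0 := by positivity
  apply mul_left_cancel₀ h3
  rw [mul_zero]
  simp only [mul_add]
  rw [hS, EA r, EB r, zero_add, Nat.choose_zero_right, Nat.choose_one_right,
      Nat.choose_self, L0 r, L1 r, Lm r]
  have hP : (2:ℝ)^r ≠ 0 := by positivity
  have e1 : (2:ℝ)^(r+2) = 4*2^r := by rw [pow_add]; ring
  have e2 : (2:ℝ)^(r+3) = 8*2^r := by rw [pow_add]; ring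
  have e3 : (1/2:ℝ)^(r+3) = 1/(8*2^r) := by
    rw [one_div, inv_pow, e2]; norm_num
  have e4 : (1/2:ℝ)^(r+2) = 1/(4*2^r) := by
    rw [one_div, inv_pow, e1]; norm_num
  rw [e1, e2, e3, e4]
  push_cast
  have h2 : ((r:ℝ)+2) ≠ 0 := by positivity
  field_simp
  ring
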